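/- Let λ ∈ (0, 1) and d₁, d₂ ∈ (0, 1/2]. Then g_λ(d₁) < g_λ(−d₁) and g_λ(d₂) < g_λ(−d₂); moreover, setting A := g_λ(d₁) − g_λ(−d₁), B := g_λ(d₂) − g_λ(−d₂), and π₁ := B/(A + B), we have π₁ ∈ (0, 1), the equalization identity π₁·g_λ(d₁) + (1 − π₁)·g_λ(−d₂) = π₁·g_λ(−d₁) + (1 − π₁)·g_λ(d₂), and this common value is at most ((2p)^λ + (2p̄)^λ)/2. -/

import Mathlib

/-- `g_λ(d) = p^λ (1/2 + (p̄-p)d)^{1-λ} + p̄^λ (1/2 - (p̄-p)d)^{1-λ}` with `p̄ = 1 - p`;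
powers are real powers. -/
noncomputable def gFun (p lam d : ℝ) : ℝ :=
  p ^ lam * (1 / 2 + ((1 - p) - p) * d) ^ (1 - lam) +
    (1 - p) ^ lam * (1 / 2 - ((1 - p) - p) * d) ^ (1 - lam)

lemma gFun_lt (p : ℝ) (hp0 : 0 < p) (hp : p < 1 / 2)
    (lam : ℝ) (hlam0 : 0 < lam) (hlam1 : lam < 1)
    (d : ℝ) (hd0 : 0 < d) (hd : d ≤ 1 / 2) :
    gFun p lam d < gFun p lam (-d) := by
  unfold gFun
  have hc : 0 < (1 - p) - p := by linarith
  set c := (1 - p) - p with hcdef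
  have hb0 : 0 < 1 / 2 - c * d := by nlinarith
  have hab : 1 / 2 - c * d < 1 / 2 + c * d := by nlinarith
  have h1 : (1 / 2 - c * d) ^ (1 - lam) < (1 / 2 + c * d) ^ (1 - lam) :=
    Real.rpow_lt_rpow hb0.le hab (by linarith)
  have h2 : p ^ lam < (1 - p) ^ lam :=
    Real.rpow_lt_rpow hp0.le (by linarith) hlam0
  have e1 : 1 / 2 + c * (-d) = 1 / 2 - c * d := by ring
  have e2 : 1 / 2 - c * (-d) = 1 / 2 + c * d := by ring
  rw [e1, e2]
  nlinarith [mul_pos (sub_pos.2 h2) (sub_pos.2 h1)]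

lemma gFun_add (p : ℝ) (hp0 : 0 < p) (hp : p < 1 / 2)
    (lam : ℝ) (hlam0 : 0 < lam) (hlam1 : lam < 1)
    (d : ℝ) (hd0 : 0 < d) (hd : d ≤ 1 / 2) :
    gFun p lam d + gFun p lam (-d) ≤ (2 * p) ^ lam + (2 * (1 - p)) ^ lam := by
  unfold gFun
  have hc : 0 < (1 - p) - p := by linarith
  set c := (1 - p) - p with hcdef
  have hb0 : (0:ℝ) ≤ 1 / 2 - c * d := by nlinarith
  have ha0 : (0:ℝ) ≤ 1 / 2 + c * d := by nlinarith
  have e1 : 1 / 2 + c * (-d) = 1 / 2 - c * d := by ring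
  have e2 : 1 / 2 - c * (-d) = 1 / 2 + c * d := by ring
  rw [e1, e2]
  -- concavity
  have hconc := (Real.concaveOn_rpow (p := 1 - lam) (by linarith) (by linarith)).2
    (Set.mem_Ici.2 ha0) (Set.mem_Ici.2 hb0)
    (by norm_num : (0:ℝ) ≤ 1/2) (by norm_num : (0:ℝ) ≤ 1/2) (by norm_num)
  simp only [smul_eq_mul] at hconc
  have emid : (1:ℝ)/2 * (1/2 + c * d) + 1/2 * (1/2 - c * d) = 1/2 := by ring
  rw [emid] at hconc
  -- hconc : 1/2 * a^t + 1/2 * b^t ≤ (1/2)^t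
  have h2l : (0:ℝ) < 2 ^ lam := Real.rpow_pos_of_pos (by norm_num) _
  have hhalf : ((1:ℝ)/2) ^ (1 - lam) = 2 ^ lam / 2 := by
    rw [Real.rpow_sub (by norm_num), Real.rpow_one, one_div, Real.inv_rpow (by norm_num : (0:ℝ) ≤ 2)]
    field_simp
  have h2p : (2 * p) ^ lam = 2 ^ lam * p ^ lam := Real.mul_rpow (by norm_num) hp0.le
  have h2q : (2 * (1 - p)) ^ lam = 2 ^ lam * (1 - p) ^ lam :=
    Real.mul_rpow (by norm_num) (by linarith)
  have hpl : (0:ℝ) ≤ p ^ lam := Real.rpow_nonneg hp0.le _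
  have hql : (0:ℝ) ≤ (1 - p) ^ lam := Real.rpow_nonneg (by linarith) _
  rw [h2p, h2q]
  have key : (1 / 2 + c * d) ^ (1 - lam) + (1 / 2 - c * d) ^ (1 - lam) ≤ 2 ^ lam := by
    rw [hhalf] at hconc
    linarith
  nlinarith [mul_le_mul_of_nonneg_left key hpl, mul_le_mul_of_nonneg_left key hql]

theorem stmt_13 (p : ℝ) (hp0 : 0 < p) (hp : p < 1 / 2)
    (lam : ℝ) (hlam0 : 0 < lam) (hlam1 : lam < 1)
    (d₁ d₂ : ℝ) (hd₁0 : 0 < d₁) (hd₁ : d₁ ≤ 1 / 2) (hd₂0 : 0 < d₂) (hd₂ : d₂ ≤ 1 / 2) :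
    gFun p lam d₁ < gFun p lam (-d₁) ∧
    gFun p lam d₂ < gFun p lam (-d₂) ∧
    (let A := gFun p lam d₁ - gFun p lam (-d₁)
     let B := gFun p lam d₂ - gFun p lam (-d₂)
     let π₁ := B / (A + B)
     0 < π₁ ∧ π₁ < 1 ∧
     π₁ * gFun p lam d₁ + (1 - π₁) * gFun p lam (-d₂) =
       π₁ * gFun p lam (-d₁) + (1 - π₁) * gFun p lam d₂ ∧
     π₁ * gFun p lam d₁ + (1 - π₁) * gFun p lam (-d₂) ≤
       ((2 * p) ^ lam + (2 * (1 - p)) ^ lam) / 2) := by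
  have h1 := gFun_lt p hp0 hp lam hlam0 hlam1 d₁ hd₁0 hd₁
  have h2 := gFun_lt p hp0 hp lam hlam0 hlam1 d₂ hd₂0 hd₂
  have hs1 := gFun_add p hp0 hp lam hlam0 hlam1 d₁ hd₁0 hd₁
  have hs2 := gFun_add p hp0 hp lam hlam0 hlam1 d₂ hd₂0 hd₂
  refine ⟨h1, h2, ?_⟩
  intro A B π₁
  have hA : A < 0 := by simp only [A]; linarith
  have hB : B < 0 := by simp only [B]; linarith
  have hAB : A + B < 0 := by linarith
  have hπpos : 0 < π₁ := div_pos_of_neg_of_neg hB hAB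
  have hne : A + B ≠ 0 := hAB.ne
  have h1π : 1 - π₁ = A / (A + B) := by
    field_simp [π₁]
    simp only [π₁]
    rw [sub_mul, div_mul_cancel₀ _ hne]
    ring
  have hπlt : π₁ < 1 := by
    have : 0 < 1 - π₁ := by rw [h1π]; exact div_pos_of_neg_of_neg hA hAB
    linarith
  have key : π₁ * A = (1 - π₁) * B := by
    rw [h1π]
    simp only [π₁]
    field_simp
  have hAe : A = gFun p lam d₁ - gFun p lam (-d₁) := rfl
  have hBe : B = gFun p lam d₂ - gFun p lam (-d₂) := rfl
  have heq : π₁ * gFun p lam d₁ + (1 - π₁) * gFun p lam (-d₂) =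
      π₁ * gFun p lam (-d₁) + (1 - π₁) * gFun p lam d₂ := by
    rw [hAe, hBe] at key; nlinarith [key]
  refine ⟨hπpos, hπlt, heq, ?_⟩
  have e1 : π₁ * (gFun p lam d₁ + gFun p lam (-d₁)) ≤
      π₁ * ((2 * p) ^ lam + (2 * (1 - p)) ^ lam) :=
    mul_le_mul_of_nonneg_left hs1 hπpos.le
  have e2 : (1 - π₁) * (gFun p lam d₂ + gFun p lam (-d₂)) ≤
      (1 - π₁) * ((2 * p) ^ lam + (2 * (1 - p)) ^ lam) :=
    mul_le_mul_of_nonneg_left hs2 (by linarith)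
  nlinarith [heq, e1, e2]
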